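/- Let $m > 1$, $\lambda > 0$, and let $g : \{t, t+1, \dots, T\} \to \mathbb{R}_{>0}$ be channel gains. Define $G(T+1) = 0$ and recursively $G(s) = \big(g(s)^{1/(m-1)} + G(s+1)^{1/(m-1)}\big)^{m-1}$ for $s \le T$. Then for any initial energy $E > 0$, the maximum of $\sum_{s=t}^{T} (g(s) p(s)/\lambda)^{1/m}$ over nonnegative power allocations $p(t),\dots,p(T)$ with $\sum_{s=t}^T p(s) \le E$ equals $(E \, G(t) / \lambda)^{1/m}$. -/

import Mathlib

open Real Set

theorem stmt_2 (m lam E : ℝ) (t T : ℕ) (g G : ℕ → ℝ)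
    (hm : 1 < m) (hlam : 0 < lam) (hE : 0 < E) (htT : t ≤ T)
    (hg : ∀ s, t ≤ s → s ≤ T → 0 < g s)
    (hGT : G (T + 1) = 0)
    (hG : ∀ s, t ≤ s → s ≤ T →
      G s = (g s ^ (1 / (m - 1)) + G (s + 1) ^ (1 / (m - 1))) ^ (m - 1)) :
    IsGreatest
      {y : ℝ | ∃ p : ℕ → ℝ, (∀ s ∈ Finset.Icc t T, 0 ≤ p s) ∧
        (∑ s ∈ Finset.Icc t T, p s) ≤ E ∧
        y = ∑ s ∈ Finset.Icc t T, (g s * p s / lam) ^ (1 / m)}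
      ((E * G t / lam) ^ (1 / m)) := by
  have hm1 : (0:ℝ) < m - 1 := by linarith
  have hm0 : (0:ℝ) < m := by linarith
  set r : ℝ := 1 / (m - 1) with hr
  have hr0 : 0 < r := by positivity
  have hmr : (m - 1) * r = 1 := by rw [hr]; field_simp
  have h1r : 1 + r = m * r := by rw [hr]; field_simp; ring
  -- key formula for G
  have key : ∀ n s, s + n = T → t ≤ s →
      G s = (∑ u ∈ Finset.Icc s T, g u ^ r) ^ (m - 1) := by
    intro n
    induction n with
    | zero =>
      intro s hs hts
      have : s = T := by omega
      subst this
      rw [hG s hts le_rfl, hGT, Real.zero_rpow (ne_of_gt hr0), add_zero,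
        Finset.Icc_self, Finset.sum_singleton]
    | succ n ih =>
      intro s hs hts
      have hsle : s ≤ T := by omega
      have hslt : s < T := by omega
      have hih := ih (s + 1) (by omega) (by omega)
      have hsum0 : 0 ≤ ∑ u ∈ Finset.Icc (s+1) T, g u ^ r := by
        apply Finset.sum_nonneg
        intro u hu
        have hu' := Finset.mem_Icc.mp hu
        exact Real.rpow_nonneg (hg u (by omega) hu'.2).le r
      rw [hG s hts hsle, hih, ← Real.rpow_mul hsum0, hmr, Real.rpow_one]
      congr 1
      rw [Finset.Icc_eq_cons_Ioc hsle, Finset.sum_cons, ← Finset.Icc_add_one_left_eq_Ioc]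
  set S : ℝ := ∑ u ∈ Finset.Icc t T, g u ^ r with hSdef
  have hGt : G t = S ^ (m - 1) := key (T - t) t (by omega) le_rfl
  have hS0 : 0 < S := by
    apply Finset.sum_pos
    · intro u hu
      have hu' := Finset.mem_Icc.mp hu
      exact Real.rpow_pos_of_pos (hg u hu'.1 hu'.2) r
    · exact ⟨t, Finset.mem_Icc.mpr ⟨le_rfl, htT⟩⟩
  have hSm1 : (0:ℝ) < S ^ (m - 1) := Real.rpow_pos_of_pos hS0 _
  constructor
  · -- membership: optimal power allocation
    refine ⟨fun u => E * g u ^ r / S, ?_, ?_, ?_⟩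
    · intro u hu
      have hu' := Finset.mem_Icc.mp hu
      have := hg u hu'.1 hu'.2
      positivity
    · have : ∑ u ∈ Finset.Icc t T, E * g u ^ r / S = E := by
        rw [← Finset.sum_div, ← Finset.mul_sum, ← hSdef, mul_div_assoc,
          div_self (ne_of_gt hS0), mul_one]
      rw [this]
    · have hterm : ∀ u ∈ Finset.Icc t T,
          (g u * (E * g u ^ r / S) / lam) ^ (1/m)
            = (E / (S * lam)) ^ (1/m) * g u ^ r := by
        intro u hu
        have hu' := Finset.mem_Icc.mp hu
        have hgu := hg u hu'.1 hu'.2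
        have h1 : g u * (E * g u ^ r / S) / lam = (E / (S * lam)) * g u ^ (m * r) := by
          rw [← h1r, Real.rpow_add hgu, Real.rpow_one]
          field_simp
        rw [h1, Real.mul_rpow (by positivity) (by positivity), ← Real.rpow_mul hgu.le]
        congr 2
        rw [hr]
        field_simp
      rw [Finset.sum_congr rfl hterm, ← Finset.mul_sum, ← hSdef, hGt]
      have hSm : E * S ^ (m-1) / lam = (E / (S * lam)) * S ^ m := by
        have : S ^ m = S ^ (m - 1) * S := by
          rw [← Real.rpow_add_one (ne_of_gt hS0)]
          ring_nf
        rw [this]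
        field_simp
      rw [hSm, Real.mul_rpow (by positivity) (by positivity),
        ← Real.rpow_mul hS0.le, mul_one_div, div_self (ne_of_gt hm0), Real.rpow_one]
  · -- upper bound
    rintro y ⟨p, hp0, hpE, rfl⟩
    have hterm : ∀ u ∈ Finset.Icc t T,
        (g u * p u / lam) ^ (1/m) = (g u / lam) ^ (1/m) * (p u) ^ (1/m) := by
      intro u hu
      have hu' := Finset.mem_Icc.mp hu
      have hgu := hg u hu'.1 hu'.2
      have : g u * p u / lam = (g u / lam) * p u := by ring
      rw [this, Real.mul_rpow (by positivity) (hp0 u hu)]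
    rw [Finset.sum_congr rfl hterm]
    have hconj : (m/(m-1)).HolderConjugate m := by
      rw [Real.holderConjugate_iff]; constructor
      · rw [lt_div_iff₀ hm1]; linarith
      · field_simp; ring
    have hold := Real.inner_le_Lp_mul_Lq (Finset.Icc t T)
      (fun u => (g u / lam) ^ (1/m)) (fun u => (p u) ^ (1/m)) hconj
    have hA : ∑ u ∈ Finset.Icc t T, |(g u / lam) ^ (1/m)| ^ (m/(m-1))
        = S / lam ^ r := by
      rw [eq_comm, div_eq_iff (by positivity : lam ^ r ≠ 0), Finset.sum_mul, hSdef]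
      apply Finset.sum_congr rfl
      intro u hu
      have hu' := Finset.mem_Icc.mp hu
      have hgu := hg u hu'.1 hu'.2
      rw [abs_of_nonneg (by positivity), ← Real.rpow_mul (by positivity)]
      have hex : 1/m * (m/(m-1)) = r := by rw [hr]; field_simp
      rw [hex, Real.div_rpow hgu.le hlam.le]
      rw [div_mul_cancel₀]
      positivity
    have hB : ∑ u ∈ Finset.Icc t T, |(p u) ^ (1/m)| ^ m = ∑ u ∈ Finset.Icc t T, p u := by
      apply Finset.sum_congr rfl
      intro u hu
      rw [abs_of_nonneg (Real.rpow_nonneg (hp0 u hu) _), ← Real.rpow_mul (hp0 u hu),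
        one_div, inv_mul_cancel₀ (ne_of_gt hm0), Real.rpow_one]
    rw [hA, hB] at hold
    have hsp0 : 0 ≤ ∑ u ∈ Finset.Icc t T, p u :=
      Finset.sum_nonneg hp0
    have hexp : 1/(m/(m-1)) = (m-1)/m := by field_simp
    rw [hexp] at hold
    have hstep : (S / lam ^ r) ^ ((m-1)/m) * (∑ u ∈ Finset.Icc t T, p u) ^ (1/m)
        ≤ (S / lam ^ r) ^ ((m-1)/m) * E ^ (1/m) := by
      apply mul_le_mul_of_nonneg_left _ (by positivity)
      exact Real.rpow_le_rpow hsp0 hpE (by positivity)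
    refine le_trans (le_trans hold hstep) (le_of_eq ?_)
    rw [hGt]
    have hlr : (lam ^ r) ^ ((m-1)/m) = lam ^ (1/m) := by
      rw [← Real.rpow_mul hlam.le]
      congr 1
      rw [hr]
      field_simp
    rw [Real.div_rpow hS0.le (by positivity), hlr,
      Real.div_rpow (by positivity) hlam.le,
      Real.mul_rpow hE.le (by positivity), ← Real.rpow_mul hS0.le]
    have : (m - 1) * (1/m) = (m-1)/m := by ring
    rw [this]
    ring
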